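/- Let G_n(m,r,s,u) be the generating function of multi-colored dimer configurations on a segment of length n, where the weight of a configuration with a connected components, b dimers, and position sum c is m^a (m−1)^{b−a} r^b s^c u^a. Then G_n satisfies the Fibonacci-type recurrence G_n(m,r,s,u) = (1 + rs(m−1)) G_{n−1}(m,rs,s,u) + rs(m(u−1)+1) G_{n−2}(m,rs²,s,u), with G_0 = G_{−1} = 1. -/
import Mathlib


/-- A dimer configuration on the segment `[0,n]` is recorded by which of the `n`
positions `1, …, n` carry a dimer; position `i` (for `0 ≤ i < n`) corresponds to the
edge `{v_i, v_{i+1}}`, i.e. to the dimer at position `i + 1`.  The colors and the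
adjacency condition are absorbed into the weight `m^a (m-1)^{b-a}`.  This helper
extends a configuration `d : Fin n → Bool` to all of `ℕ` by `false`. -/
def dimerAt (n : ℕ) (d : Fin n → Bool) (i : ℕ) : Bool :=
  if h : i < n then d ⟨i, h⟩ else false

/-- `b`: the number of dimers of a configuration. -/
def numDimers (n : ℕ) (d : Fin n → Bool) : ℕ :=
  ∑ i ∈ Finset.range n, if dimerAt n d i then 1 else 0

/-- `c`: the sum of the positions of the dimers (the dimer indexed by `i` sits at
position `i + 1`). -/
def posSum (n : ℕ) (d : Fin n → Bool) : ℕ :=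
  ∑ i ∈ Finset.range n, if dimerAt n d i then i + 1 else 0

/-- `a`: the number of connected components, i.e. the number of dimers whose left
neighbour position carries no dimer. -/
def numComponents (n : ℕ) (d : Fin n → Bool) : ℕ :=
  ∑ i ∈ Finset.range n,
    if dimerAt n d i = true ∧ (i = 0 ∨ dimerAt n d (i - 1) = false) then 1 else 0

/-- The generating function `G_n(m,r,s,u)` of multi-colored dimer configurations:
each configuration with `a` components, `b` dimers and position sum `c` contributes
`m^a (m-1)^{b-a} r^b s^c u^a`. -/
noncomputable def dimerGF (n : ℕ) (m r s u : ℚ) : ℚ :=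
  ∑ d : Fin n → Bool,
    m ^ numComponents n d * (m - 1) ^ (numDimers n d - numComponents n d) *
      r ^ numDimers n d * s ^ posSum n d * u ^ numComponents n d

/-- The Fibonacci-type recurrence
`G_n(m,r,s,u) = (1 + rs(m-1)) G_{n-1}(m,rs,s,u) + rs(m(u-1)+1) G_{n-2}(m,rs²,s,u)`,
with the initial conditions `G_0 = G_{-1} = 1` (the `n = 1` instance below uses
`G_{-1} = 1`), as a polynomial identity, i.e. for all values of `m, r, s, u`. -/
noncomputable def W (n : ℕ) (m r s u : ℚ) (d : Fin n → Bool) : ℚ :=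
  m ^ numComponents n d * (m - 1) ^ (numDimers n d - numComponents n d) *
    r ^ numDimers n d * s ^ posSum n d * u ^ numComponents n d

lemma dimerGF_eq_sum_W (n : ℕ) (m r s u : ℚ) :
    dimerGF n m r s u = ∑ d : Fin n → Bool, W n m r s u d := rfl

lemma dimerAt_cons_zero (n : ℕ) (b : Bool) (d : Fin n → Bool) :
    dimerAt (n + 1) (Fin.cons b d) 0 = b := by
  simp [dimerAt]

lemma dimerAt_cons_succ (n : ℕ) (b : Bool) (d : Fin n → Bool) (i : ℕ) :
    dimerAt (n + 1) (Fin.cons b d) (i + 1) = dimerAt n d i := by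
  unfold dimerAt
  by_cases h : i < n
  · rw [dif_pos (Nat.succ_lt_succ h), dif_pos h]
    have he : (⟨i + 1, Nat.succ_lt_succ h⟩ : Fin (n + 1)) = (⟨i, h⟩ : Fin n).succ := rfl
    rw [he, Fin.cons_succ]
  · rw [dif_neg (by omega), dif_neg h]

lemma numDimers_cons (n : ℕ) (b : Bool) (d : Fin n → Bool) :
    numDimers (n + 1) (Fin.cons b d) = (if b then 1 else 0) + numDimers n d := by
  unfold numDimers
  rw [Finset.sum_range_succ']
  simp only [dimerAt_cons_succ, dimerAt_cons_zero]
  omega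

lemma posSum_cons (n : ℕ) (b : Bool) (d : Fin n → Bool) :
    posSum (n + 1) (Fin.cons b d) = (if b then 1 else 0) + numDimers n d + posSum n d := by
  unfold posSum numDimers
  rw [Finset.sum_range_succ']
  simp only [dimerAt_cons_succ, dimerAt_cons_zero]
  have h1 : ∑ i ∈ Finset.range n, (if dimerAt n d i = true then i + 1 + 1 else 0)
      = (∑ i ∈ Finset.range n, if dimerAt n d i = true then 1 else 0)
        + ∑ i ∈ Finset.range n, (if dimerAt n d i = true then i + 1 else 0) := by
    rw [← Finset.sum_add_distrib]
    refine Finset.sum_congr rfl fun i _ => ?_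
    by_cases h : dimerAt n d i <;> simp [h] <;> omega
  rw [h1]
  cases b <;> simp <;> omega

lemma numComponents_cons_false (n : ℕ) (d : Fin n → Bool) :
    numComponents (n + 1) (Fin.cons false d) = numComponents n d := by
  unfold numComponents
  rw [Finset.sum_range_succ']
  simp only [dimerAt_cons_zero, Bool.false_eq_true, false_and, if_false, add_zero]
  refine Finset.sum_congr rfl fun i _ => ?_
  rcases Nat.eq_zero_or_pos i with hi | hi
  · subst hi
    simp [dimerAt_cons_succ, dimerAt_cons_zero]
  · obtain ⟨j, rfl⟩ := Nat.exists_eq_add_of_lt hi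
    simp [dimerAt_cons_succ]

lemma numComponents_cons_true (n : ℕ) (d : Fin n → Bool) :
    numComponents (n + 1) (Fin.cons true d) + (if dimerAt n d 0 then 1 else 0)
      = 1 + numComponents n d := by
  unfold numComponents
  rw [Finset.sum_range_succ']
  have h0 : (if dimerAt (n+1) (Fin.cons true d) 0 = true ∧
      (0 = 0 ∨ dimerAt (n+1) (Fin.cons true d) (0 - 1) = false) then 1 else 0) = 1 := by
    simp [dimerAt_cons_zero]
  rw [h0]
  have key : ∑ i ∈ Finset.range n,
      (if dimerAt n d i = true ∧ (i = 0 ∨ dimerAt n d (i - 1) = false) then 1 else 0)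
      = (∑ i ∈ Finset.range n,
          if dimerAt (n+1) (Fin.cons true d) (i+1) = true ∧
            (i + 1 = 0 ∨ dimerAt (n+1) (Fin.cons true d) (i + 1 - 1) = false) then 1 else 0)
        + ∑ i ∈ Finset.range n, (if i = 0 ∧ dimerAt n d 0 = true then 1 else 0) := by
    rw [← Finset.sum_add_distrib]
    refine Finset.sum_congr rfl fun i _ => ?_
    rcases Nat.eq_zero_or_pos i with hi | hi
    · subst hi
      simp only [Nat.zero_add, Nat.add_sub_cancel, dimerAt_cons_succ, dimerAt_cons_zero]
      cases h : dimerAt n d 0 <;> simp [dimerAt_cons_zero, h]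
    · obtain ⟨j, rfl⟩ := Nat.exists_eq_add_of_lt hi
      simp [dimerAt_cons_succ]
  rw [key]
  have hδ : ∑ i ∈ Finset.range n, (if i = 0 ∧ dimerAt n d 0 = true then 1 else 0)
      = if dimerAt n d 0 then 1 else 0 := by
    cases n with
    | zero => simp [dimerAt]
    | succ k =>
      rw [Finset.sum_range_succ']
      simp
  rw [hδ]
  omega

lemma numComponents_le (n : ℕ) (d : Fin n → Bool) :
    numComponents n d ≤ numDimers n d := by
  unfold numComponents numDimers
  refine Finset.sum_le_sum fun i _ => ?_
  by_cases h : dimerAt n d i = true ∧ (i = 0 ∨ dimerAt n d (i - 1) = false)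
  · rw [if_pos h, if_pos h.1]
  · rw [if_neg h]; positivity

lemma W_cons_false (n : ℕ) (m r s u : ℚ) (d : Fin n → Bool) :
    W (n + 1) m r s u (Fin.cons false d) = W n m (r * s) s u d := by
  unfold W
  rw [numDimers_cons, posSum_cons, numComponents_cons_false]
  simp only [Bool.false_eq_true, if_false, Nat.zero_add]
  simp only [pow_add, mul_pow]
  ring

lemma W_cons_true_false (n : ℕ) (m r s u : ℚ) (d : Fin n → Bool)
    (h : dimerAt n d 0 = false) :
    W (n + 1) m r s u (Fin.cons true d) = m * u * (r * s) * W n m (r * s) s u d := by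
  have hc : numComponents (n + 1) (Fin.cons true d) = 1 + numComponents n d := by
    have := numComponents_cons_true n d
    rw [h] at this
    simpa using this
  unfold W
  rw [numDimers_cons, posSum_cons, hc]
  simp only [if_true]
  have hsub : 1 + numDimers n d - (1 + numComponents n d)
      = numDimers n d - numComponents n d := by omega
  rw [hsub]
  simp only [pow_add, mul_pow, pow_one]
  ring

lemma W_cons_true_true (n : ℕ) (m r s u : ℚ) (d : Fin n → Bool)
    (h : dimerAt n d 0 = true) :
    W (n + 1) m r s u (Fin.cons true d) = (m - 1) * (r * s) * W n m (r * s) s u d := by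
  have hc : numComponents (n + 1) (Fin.cons true d) = numComponents n d := by
    have := numComponents_cons_true n d
    rw [h] at this
    simp at this
    omega
  unfold W
  rw [numDimers_cons, posSum_cons, hc]
  simp only [if_true]
  have hsub : 1 + numDimers n d - numComponents n d
      = (numDimers n d - numComponents n d) + 1 := by
    have := numComponents_le n d; omega
  rw [hsub]
  simp only [pow_add, mul_pow, pow_one]
  ring

lemma sum_split (n : ℕ) (f : (Fin (n + 1) → Bool) → ℚ) :
    ∑ d : Fin (n + 1) → Bool, f d
      = (∑ d : Fin n → Bool, f (Fin.cons false d))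
        + ∑ d : Fin n → Bool, f (Fin.cons true d) := by
  rw [← Equiv.sum_comp (Fin.consEquiv fun _ => Bool) f, Fintype.sum_prod_type,
    Fintype.sum_bool, add_comm]
  rfl

theorem dimerGF_fibonacci_recurrence (m r s u : ℚ) :
    dimerGF 0 m r s u = 1 ∧
    dimerGF 1 m r s u
      = (1 + r * s * (m - 1)) * dimerGF 0 m (r * s) s u + r * s * (m * (u - 1) + 1) * 1 ∧
    ∀ n : ℕ,
      dimerGF (n + 2) m r s u
        = (1 + r * s * (m - 1)) * dimerGF (n + 1) m (r * s) s u
            + r * s * (m * (u - 1) + 1) * dimerGF n m (r * s ^ 2) s u := by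
  have hW0 : ∀ (m' r' s' u' : ℚ) (d : Fin 0 → Bool), W 0 m' r' s' u' d = 1 := by
    intro m' r' s' u' d
    simp [W, numDimers, posSum, numComponents]
  have hG0 : ∀ (m' r' s' u' : ℚ), dimerGF 0 m' r' s' u' = 1 := by
    intro m' r' s' u'
    rw [dimerGF_eq_sum_W]
    rw [Finset.sum_congr rfl fun d _ => hW0 m' r' s' u' d]
    simp
  have hA0 : ∀ (d : Fin 0 → Bool), dimerAt 0 d 0 = false := by
    intro d; simp [dimerAt]
  have hfalse : ∀ (k : ℕ) (r' : ℚ),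
      ∑ d : Fin k → Bool, W (k + 1) m r' s u (Fin.cons false d)
        = dimerGF k m (r' * s) s u := by
    intro k r'
    rw [dimerGF_eq_sum_W]
    exact Finset.sum_congr rfl fun d _ => W_cons_false k m r' s u d
  refine ⟨hG0 m r s u, ?_, ?_⟩
  · rw [dimerGF_eq_sum_W, sum_split 0, hG0]
    rw [Finset.sum_congr rfl fun d _ => W_cons_false 0 m r s u d,
      Finset.sum_congr rfl fun d _ => W_cons_true_false 0 m r s u d (hA0 d)]
    rw [Finset.sum_congr rfl fun d _ => hW0 m (r*s) s u d,
      Finset.sum_congr rfl fun d _ => congrArg (m * u * (r*s) * ·) (hW0 m (r*s) s u d)]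
    simp only [Finset.sum_const, Finset.card_univ]
    simp
    ring
  · intro n
    have e1 : dimerGF (n + 2) m r s u
        = (∑ d : Fin (n+1) → Bool, W (n + 2) m r s u (Fin.cons false d))
          + ∑ d : Fin (n+1) → Bool, W (n + 2) m r s u (Fin.cons true d) := by
      rw [dimerGF_eq_sum_W, sum_split]
    have htrue : ∑ d : Fin (n+1) → Bool, W (n + 2) m r s u (Fin.cons true d)
        = m * u * (r * s) * dimerGF n m ((r * s) * s) s u
          + (m - 1) * (r * s)
            * ∑ d : Fin n → Bool, W (n + 1) m (r * s) s u (Fin.cons true d) := by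
      rw [sum_split]
      rw [Finset.sum_congr rfl fun d _ => W_cons_true_false (n+1) m r s u (Fin.cons false d)
        (by rw [dimerAt_cons_zero])]
      rw [Finset.sum_congr rfl fun d _ => W_cons_true_true (n+1) m r s u (Fin.cons true d)
        (by rw [dimerAt_cons_zero])]
      rw [← Finset.mul_sum, ← Finset.mul_sum, hfalse n (r * s)]
    have e2 : dimerGF (n + 1) m (r * s) s u
        = dimerGF n m ((r * s) * s) s u
          + ∑ d : Fin n → Bool, W (n + 1) m (r * s) s u (Fin.cons true d) := by
      rw [dimerGF_eq_sum_W, sum_split, hfalse n (r * s)]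
    have e3 : (r * s) * s = r * s ^ 2 := by ring
    rw [e3] at e2
    rw [e1, hfalse (n + 1) r, htrue, e3]
    linear_combination (-(m - 1) * r * s) * e2
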